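/- Let G₆ = g^{⊗15} be a neutral IIA GSWF on n voters and 6 alternatives with restrictions G₅, G₄, G₃ to 5, 4, 3 alternatives respectively. Then GCW(G₅) = GCW(G₆)/3 + 5·GCW(G₃)/3 − 1. -/

import Mathlib

open Finset
open scoped Classical

/-- A linear order on `m` alternatives, represented by its ranking permutation:
`σ a` is the rank of alternative `a` (rank `0` is most preferred). -/
abbrev OrderM (m : ℕ) := Equiv.Perm (Fin m)

/-- A profile of `n` voters on `m` alternatives. -/
abbrev ProfileM (n m : ℕ) := Fin n → OrderM m

/-- Voter with ranking `σ` prefers alternative `a` over alternative `b`. -/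
def PrefersM (m : ℕ) (σ : OrderM m) (a b : Fin m) : Prop := σ a < σ b

/-- The column `x^{a,b} ∈ {0,1}ⁿ` of individual preferences between `a` and `b`. -/
noncomputable def colM (n m : ℕ) (x : ProfileM n m) (a b : Fin m) : Fin n → Bool :=
  fun i => decide (PrefersM m (x i) a b)

/-- `GCW(g^{⊗C(m,2)})`: the probability that a uniform profile on `m` alternatives has a
Generalized Condorcet Winner under the neutral IIA GSWF determined by `g`. -/
noncomputable def GCWprob (n m : ℕ) (g : (Fin n → Bool) → Bool) : ℝ :=
  ((univ.filter (fun x : ProfileM n m =>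
      ∃ a : Fin m, ∀ b : Fin m, b ≠ a → g (colM n m x a b) = true)).card : ℝ) /
  (Fintype.card (ProfileM n m) : ℝ)

section Aux

variable (n : ℕ) (g : (Fin n → Bool) → Bool)

lemma col_swap {m : ℕ} (x : ProfileM n m) {a b : Fin m} (h : a ≠ b) (i : Fin n) :
    colM n m x b a i = ! colM n m x a b i := by
  simp only [colM, PrefersM]
  have hne : (x i) a ≠ (x i) b := fun hc => h ((x i).injective hc)
  rcases lt_or_gt_of_ne hne with h1 | h1
  · simp [h1, not_lt_of_gt h1, le_of_lt h1]
  · simp [h1, not_lt_of_gt h1]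

/-- The boolean pattern of a 6-profile: whether alternative 0 beats alternative `j+1`. -/
noncomputable def patF (x : ProfileM n 6) : Fin 5 → Bool :=
  fun j => g (colM n 6 x 0 j.succ)

noncomputable def Cnt (P : (Fin 5 → Bool) → Bool) : ℕ :=
  (univ.filter (fun x : ProfileM n 6 => P (patF n g x) = true)).card

lemma Cnt_congr {P Q : (Fin 5 → Bool) → Bool} (h : ∀ w, P w = Q w) :
    Cnt n g P = Cnt n g Q := by
  unfold Cnt; congr 1; apply filter_congr; intro x _; rw [h]

lemma Cnt_split (P : (Fin 5 → Bool) → Bool) (k : Fin 5) :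
    Cnt n g P = Cnt n g (fun w => P w && w k) + Cnt n g (fun w => P w && !(w k)) := by
  unfold Cnt
  rw [← Finset.card_filter_add_card_filter_not
    (s := univ.filter (fun x : ProfileM n 6 => P (patF n g x) = true))
    (p := fun x => patF n g x k = true)]
  congr 1
  · rw [filter_filter]; apply congrArg; apply filter_congr; intro x _
    constructor
    · rintro ⟨h1, h2⟩; simp [h1, h2]
    · intro h; simp only [Bool.and_eq_true] at h; exact ⟨h.1, h.2⟩
  · rw [filter_filter]; apply congrArg; apply filter_congr; intro x _
    constructor
    · rintro ⟨h1, h2⟩; simp [h1]; simpa using h2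
    · intro h; simp only [Bool.and_eq_true, Bool.not_eq_true'] at h
      exact ⟨h.1, by simp [h.2]⟩

/-- relabeling the alternatives 1..5 by `π` (fixing 0). -/
lemma Cnt_perm (π : Equiv.Perm (Fin 5)) (P : (Fin 5 → Bool) → Bool) :
    Cnt n g (fun w => P (fun j => w (π j))) = Cnt n g P := by
  classical
  set ρ : Equiv.Perm (Fin 6) :=
    ((finSuccEquiv 5).trans ((Equiv.optionCongr π).trans (finSuccEquiv 5).symm)) with hρ
  have hρ0 : ρ 0 = 0 := by simp [hρ]
  have hρs : ∀ j : Fin 5, ρ j.succ = (π j).succ := by intro j; simp [hρ]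
  have key : ∀ x : ProfileM n 6, patF n g (fun i => ρ.trans (x i)) = fun j => patF n g x (π j) := by
    intro x; funext j
    have hcol : colM n 6 (fun i => ρ.trans (x i)) 0 j.succ = colM n 6 x 0 (π j).succ := by
      funext i
      simp only [colM, PrefersM, Equiv.trans_apply, hρ0, hρs]
      exact decide_eq_decide.mpr Iff.rfl
    simp only [patF]
    rw [hcol]
  unfold Cnt
  apply Finset.card_equiv (Equiv.piCongrRight (fun _ : Fin n => Equiv.mulRight ρ))
  intro x
  have : (Equiv.piCongrRight (fun _ : Fin n => Equiv.mulRight ρ)) x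
      = fun i => ρ.trans (x i) := by
    funext i; ext a; simp [Equiv.Perm.mul_def]
  rw [this]
  simp only [mem_filter, mem_univ, true_and, key x]

lemma Cnt_compl (hodd : ∀ z : Fin n → Bool, g (fun i => !z i) = !g z)
    (P : (Fin 5 → Bool) → Bool) :
    Cnt n g (fun w => P (fun j => ! w j)) = Cnt n g P := by
  have key : ∀ x : ProfileM n 6,
      patF n g (fun i => (x i).trans Fin.revPerm) = fun j => ! patF n g x j := by
    intro x; funext j
    simp only [patF]
    have hc : colM n 6 (fun i => (x i).trans Fin.revPerm) 0 j.succ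
        = fun i => ! colM n 6 x 0 j.succ i := by
      funext i
      simp only [colM, PrefersM, Equiv.trans_apply, Fin.revPerm_apply]
      have hne : (x i) 0 ≠ (x i) j.succ :=
        fun hc => (Fin.succ_ne_zero j).symm ((x i).injective hc)
      rcases lt_or_gt_of_ne hne with h1 | h1
      · simp [Fin.rev_lt_rev, h1, not_lt_of_gt h1]
      · simp [Fin.rev_lt_rev, h1, not_lt_of_gt h1, le_of_lt h1]
    rw [hc, hodd]
  unfold Cnt
  apply Finset.card_equiv (Equiv.piCongrRight (fun _ : Fin n => Equiv.mulLeft Fin.revPerm))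
  intro x
  have : (Equiv.piCongrRight (fun _ : Fin n => Equiv.mulLeft Fin.revPerm)) x
      = fun i => (x i).trans Fin.revPerm := by
    funext i; ext a; simp [Equiv.Perm.mul_def]
  rw [this]
  simp only [mem_filter, mem_univ, true_and, key x]

lemma Cnt_total : Cnt n g (fun _ => true) = Fintype.card (ProfileM n 6) := by
  unfold Cnt; simp

end Aux

section Counts
variable (n : ℕ) (g : (Fin n → Bool) → Bool)

/-- Condition: first `a` coordinates true, next `b` coordinates false. -/
def cnd (a b : ℕ) : (Fin 5 → Bool) → Bool := fun w =>
  decide (∀ j : Fin 5, (j.val < a → w j = true) ∧ (a ≤ j.val → j.val < a + b → w j = false))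

lemma split00 : Cnt n g (cnd 0 0) = Cnt n g (cnd 1 0) + Cnt n g (cnd 0 1) := by
  rw [Cnt_split n g (cnd 0 0) 0]
  congr 1
  · exact Cnt_congr n g (by decide)
  · exact Cnt_congr n g (by decide)

lemma split10 : Cnt n g (cnd 1 0) = Cnt n g (cnd 2 0) + Cnt n g (cnd 1 1) := by
  rw [Cnt_split n g (cnd 1 0) 1]
  congr 1
  · exact Cnt_congr n g (by decide)
  · exact Cnt_congr n g (by decide)

lemma split20 : Cnt n g (cnd 2 0) = Cnt n g (cnd 3 0) + Cnt n g (cnd 2 1) := by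
  rw [Cnt_split n g (cnd 2 0) 2]
  congr 1
  · exact Cnt_congr n g (by decide)
  · exact Cnt_congr n g (by decide)

lemma split30 : Cnt n g (cnd 3 0) = Cnt n g (cnd 4 0) + Cnt n g (cnd 3 1) := by
  rw [Cnt_split n g (cnd 3 0) 3]
  congr 1
  · exact Cnt_congr n g (by decide)
  · exact Cnt_congr n g (by decide)

lemma split40 : Cnt n g (cnd 4 0) = Cnt n g (cnd 5 0) + Cnt n g (cnd 4 1) := by
  rw [Cnt_split n g (cnd 4 0) 4]
  congr 1
  · exact Cnt_congr n g (by decide)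
  · exact Cnt_congr n g (by decide)

set_option maxHeartbeats 1000000 in
lemma split11 : Cnt n g (cnd 1 1) = Cnt n g (cnd 2 1) + Cnt n g (cnd 1 2) := by
  rw [Cnt_split n g (cnd 1 1) 2]
  congr 1
  · calc Cnt n g (fun w => cnd 1 1 w && w 2)
        = Cnt n g (fun w => cnd 2 1 (fun j => w (Equiv.swap 1 2 j))) :=
          Cnt_congr n g (by decide)
      _ = Cnt n g (cnd 2 1) := Cnt_perm n g _ _
  · exact Cnt_congr n g (by decide)

set_option maxHeartbeats 1000000 in
lemma split21 : Cnt n g (cnd 2 1) = Cnt n g (cnd 3 1) + Cnt n g (cnd 2 2) := by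
  rw [Cnt_split n g (cnd 2 1) 3]
  congr 1
  · calc Cnt n g (fun w => cnd 2 1 w && w 3)
        = Cnt n g (fun w => cnd 3 1 (fun j => w (Equiv.swap 2 3 j))) :=
          Cnt_congr n g (by decide)
      _ = Cnt n g (cnd 3 1) := Cnt_perm n g _ _
  · exact Cnt_congr n g (by decide)

set_option maxHeartbeats 1000000 in
lemma split31 : Cnt n g (cnd 3 1) = Cnt n g (cnd 4 1) + Cnt n g (cnd 3 2) := by
  rw [Cnt_split n g (cnd 3 1) 4]
  congr 1
  · calc Cnt n g (fun w => cnd 3 1 w && w 4)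
        = Cnt n g (fun w => cnd 4 1 (fun j => w (Equiv.swap 3 4 j))) :=
          Cnt_congr n g (by decide)
      _ = Cnt n g (cnd 4 1) := Cnt_perm n g _ _
  · exact Cnt_congr n g (by decide)

set_option maxHeartbeats 1000000 in
lemma split22 : Cnt n g (cnd 2 2) = Cnt n g (cnd 3 2) + Cnt n g (cnd 2 3) := by
  rw [Cnt_split n g (cnd 2 2) 4]
  congr 1
  · calc Cnt n g (fun w => cnd 2 2 w && w 4)
        = Cnt n g (fun w => cnd 3 2 (fun j => w (((Equiv.swap 2 3).trans (Equiv.swap 3 4)) j))) :=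
          Cnt_congr n g (by decide)
      _ = Cnt n g (cnd 3 2) := Cnt_perm n g _ _
  · exact Cnt_congr n g (by decide)

set_option maxHeartbeats 1000000 in
lemma compl01 (hodd : ∀ z : Fin n → Bool, g (fun i => !z i) = !g z) : Cnt n g (cnd 0 1) = Cnt n g (cnd 1 0) := by
  calc Cnt n g (cnd 0 1)
      = Cnt n g (fun w => cnd 1 0 (fun j => ! w j)) := Cnt_congr n g (by decide)
    _ = Cnt n g (cnd 1 0) := Cnt_compl n g hodd _

set_option maxHeartbeats 1000000 in
lemma compl12 (hodd : ∀ z : Fin n → Bool, g (fun i => !z i) = !g z) :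
    Cnt n g (cnd 2 1) = Cnt n g (cnd 1 2) := by
  calc Cnt n g (cnd 2 1)
      = Cnt n g (fun w => (fun v => cnd 1 2 (fun j => v (Equiv.swap 0 2 j)))
          (fun j => ! w j)) := Cnt_congr n g (by decide)
    _ = Cnt n g (fun v => cnd 1 2 (fun j => v (Equiv.swap 0 2 j))) := Cnt_compl n g hodd
        (fun v => cnd 1 2 (fun j => v (Equiv.swap 0 2 j)))
    _ = Cnt n g (cnd 1 2) := Cnt_perm n g (Equiv.swap 0 2) (cnd 1 2)

set_option maxHeartbeats 1000000 in
lemma compl23 (hodd : ∀ z : Fin n → Bool, g (fun i => !z i) = !g z) :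
    Cnt n g (cnd 3 2) = Cnt n g (cnd 2 3) := by
  calc Cnt n g (cnd 3 2)
      = Cnt n g (fun w => (fun v => cnd 2 3 (fun j =>
          v ((Equiv.swap 0 3) ((Equiv.swap 1 4) j)))) (fun j => ! w j)) :=
        Cnt_congr n g (by decide)
    _ = Cnt n g (fun v => cnd 2 3 (fun j =>
          v ((Equiv.swap 0 3) ((Equiv.swap 1 4) j)))) := Cnt_compl n g hodd
        (fun v => cnd 2 3 (fun j => v ((Equiv.swap 0 3) ((Equiv.swap 1 4) j))))
    _ = Cnt n g (cnd 2 3) := by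
        calc Cnt n g (fun v => cnd 2 3 (fun j => v ((Equiv.swap 0 3) ((Equiv.swap 1 4) j))))
            = Cnt n g (fun v => (fun u => cnd 2 3 (fun j => u (Equiv.swap 1 4 j)))
                (fun j => v (Equiv.swap 0 3 j))) := Cnt_congr n g (fun w => rfl)
          _ = Cnt n g (fun u => cnd 2 3 (fun j => u (Equiv.swap 1 4 j))) :=
              Cnt_perm n g (Equiv.swap 0 3) (fun u => cnd 2 3 (fun j => u (Equiv.swap 1 4 j)))
          _ = Cnt n g (cnd 2 3) := Cnt_perm n g (Equiv.swap 1 4) (cnd 2 3)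

lemma keyNat (hodd : ∀ z : Fin n → Bool, g (fun i => !z i) = !g z) :
    5 * Cnt n g (cnd 4 0) + Cnt n g (cnd 0 0)
      = 2 * Cnt n g (cnd 5 0) + 5 * Cnt n g (cnd 2 0) := by
  have h00 := split00 n g
  have h10 := split10 n g
  have h20 := split20 n g
  have h30 := split30 n g
  have h40 := split40 n g
  have h11 := split11 n g
  have h21 := split21 n g
  have h31 := split31 n g
  have h22 := split22 n g
  have c01 := compl01 n g hodd
  have c12 := compl12 n g hodd
  have c23 := compl23 n g hodd
  omega

end Counts

section L1
variable (n : ℕ) (g : (Fin n → Bool) → Bool)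

lemma L1 (m : ℕ) [NeZero m] (hodd : ∀ z : Fin n → Bool, g (fun i => !z i) = !g z) :
    (univ.filter (fun x : ProfileM n m =>
        ∃ a : Fin m, ∀ b : Fin m, b ≠ a → g (colM n m x a b) = true)).card
      = m * (univ.filter (fun x : ProfileM n m =>
        ∀ b : Fin m, b ≠ 0 → g (colM n m x 0 b) = true)).card := by
  classical
  set Ea : Fin m → Finset (ProfileM n m) := fun a =>
    univ.filter (fun x => ∀ b : Fin m, b ≠ a → g (colM n m x a b) = true) with hEa
  have hU : (univ.filter (fun x : ProfileM n m =>
      ∃ a : Fin m, ∀ b : Fin m, b ≠ a → g (colM n m x a b) = true))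
      = univ.biUnion Ea := by
    ext x; simp [hEa, mem_biUnion]
  have hdisj : ∀ a ∈ (univ : Finset (Fin m)), ∀ a' ∈ (univ : Finset (Fin m)),
      a ≠ a' → Disjoint (Ea a) (Ea a') := by
    intro a _ a' _ hne
    rw [Finset.disjoint_left]
    intro x hx hx'
    simp only [hEa, mem_filter, mem_univ, true_and] at hx hx'
    have h1 : g (colM n m x a a') = true := hx a' (Ne.symm hne)
    have h2 : g (colM n m x a' a) = true := hx' a hne
    have h3 : colM n m x a' a = fun i => ! colM n m x a a' i := by
      funext i; exact col_swap n x hne i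
    rw [h3, hodd, h1] at h2
    simp at h2
  have hcard : ∀ a : Fin m, (Ea a).card = (Ea 0).card := by
    intro a
    apply Finset.card_equiv (Equiv.piCongrRight
      (fun _ : Fin n => Equiv.mulRight (Equiv.swap (0 : Fin m) a)))
    intro x
    have hx : (Equiv.piCongrRight (fun _ : Fin n => Equiv.mulRight (Equiv.swap (0 : Fin m) a))) x
        = fun i => (Equiv.swap (0 : Fin m) a).trans (x i) := by
      funext i; ext c; simp [Equiv.Perm.mul_def]
    rw [hx]
    simp only [hEa, mem_filter, mem_univ, true_and]
    constructor
    · intro h b hb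
      have hcol : colM n m (fun i => (Equiv.swap (0 : Fin m) a).trans (x i)) 0 b
          = colM n m x a (Equiv.swap (0 : Fin m) a b) := by
        funext i
        simp only [colM, PrefersM, Equiv.trans_apply, Equiv.swap_apply_left]
        exact decide_eq_decide.mpr Iff.rfl
      rw [hcol]
      apply h
      intro hc
      apply hb
      have h2 := congrArg (Equiv.swap (0 : Fin m) a) hc
      rwa [Equiv.swap_apply_self, Equiv.swap_apply_right] at h2
    · intro h b hb
      have hcol : colM n m x a b
          = colM n m (fun i => (Equiv.swap (0 : Fin m) a).trans (x i)) 0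
            (Equiv.swap (0 : Fin m) a b) := by
        funext i
        simp only [colM, PrefersM, Equiv.trans_apply, Equiv.swap_apply_left,
          Equiv.swap_apply_self]
        exact decide_eq_decide.mpr Iff.rfl
      rw [hcol]
      apply h
      intro hc
      apply hb
      have h2 := congrArg (Equiv.swap (0 : Fin m) a) hc
      rwa [Equiv.swap_apply_self, Equiv.swap_apply_left] at h2
  rw [hU, Finset.card_biUnion hdisj]
  rw [Finset.sum_congr rfl (fun a _ => hcard a)]
  simp [Finset.card_univ, mul_comm]
  exact Or.inl rfl

end L1

section Marg

lemma perm_eq_of_lt_iff {m : ℕ} (τ τ' : Equiv.Perm (Fin m))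
    (h : ∀ a b, τ a < τ b ↔ τ' a < τ' b) : τ = τ' := by
  have hs : StrictMono (fun x => τ' (τ.symm x)) := by
    intro x y hxy
    have hx : τ (τ.symm x) < τ (τ.symm y) := by simpa using hxy
    exact (h _ _).mp hx
  haveI : WellFoundedLT (Fin m) := Finite.to_wellFoundedLT
  have hid : (fun x => τ' (τ.symm x)) = (id : Fin m → Fin m) := by
    apply (StrictMono.range_inj hs strictMono_id).mp
    rw [Set.range_id]
    exact (τ'.surjective.comp τ.symm.surjective).range_eq
  apply Equiv.ext
  intro a
  have := congrFun hid (τ a)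
  simpa using this.symm

noncomputable def resPerm {m : ℕ} (hm : m ≤ 6) (σ : Equiv.Perm (Fin 6)) :
    Equiv.Perm (Fin m) := by
  classical
  have hinj : Function.Injective (fun c : Fin m => σ (Fin.castLE hm c)) :=
    fun a b hab => Fin.castLE_injective hm (σ.injective hab)
  have hcard : ((univ : Finset (Fin m)).image (fun c : Fin m => σ (Fin.castLE hm c))).card = m := by
    rw [Finset.card_image_of_injective _ hinj, card_univ, Fintype.card_fin]
  refine Equiv.ofBijective (fun a =>
    (((univ : Finset (Fin m)).image (fun c : Fin m => σ (Fin.castLE hm c))).orderIsoOfFin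
      hcard).symm ⟨σ (Fin.castLE hm a), by simp [Finset.mem_image]⟩) ?_
  rw [← Finite.injective_iff_bijective]
  intro a b hab
  have h2 := congrArg (((univ : Finset (Fin m)).image
    (fun c : Fin m => σ (Fin.castLE hm c))).orderIsoOfFin hcard) hab
  simp only [OrderIso.apply_symm_apply, Subtype.mk.injEq] at h2
  exact hinj h2

lemma resPerm_lt {m : ℕ} (hm : m ≤ 6) (σ : Equiv.Perm (Fin 6)) (a b : Fin m) :
    (resPerm hm σ a < resPerm hm σ b ↔ σ (Fin.castLE hm a) < σ (Fin.castLE hm b)) := by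
  classical
  unfold resPerm
  simp only [Equiv.ofBijective_apply]
  simp only [OrderIso.lt_iff_lt, Subtype.mk_lt_mk]

noncomputable def iotaPerm {m : ℕ} (hm : m ≤ 6) (π : Equiv.Perm (Fin m)) :
    Equiv.Perm (Fin 6) :=
  π.viaFintypeEmbedding (Fin.castLEEmb hm)

lemma iota_apply {m : ℕ} (hm : m ≤ 6) (π : Equiv.Perm (Fin m)) (a : Fin m) :
    iotaPerm hm π (Fin.castLE hm a) = Fin.castLE hm (π a) := by
  have := Equiv.Perm.viaFintypeEmbedding_apply_image π (Fin.castLEEmb hm) a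
  simpa [iotaPerm, Fin.coe_castLEEmb] using this

lemma iota_not {m : ℕ} (hm : m ≤ 6) (π : Equiv.Perm (Fin m)) (x : Fin 6)
    (hx : ¬ x.val < m) : iotaPerm hm π x = x := by
  apply Equiv.Perm.viaFintypeEmbedding_apply_notMem_range
  rintro ⟨a, ha⟩
  apply hx
  have : x.val = a.val := by rw [← ha]; rfl
  rw [this]
  exact a.isLt

lemma iota_inv {m : ℕ} (hm : m ≤ 6) (π : Equiv.Perm (Fin m)) (x : Fin 6) :
    iotaPerm hm π⁻¹ (iotaPerm hm π x) = x := by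
  by_cases hx : x.val < m
  · have hx2 : x = Fin.castLE hm ⟨x.val, hx⟩ := by ext; rfl
    rw [hx2, iota_apply, iota_apply]
    congr 1
    simp
  · rw [iota_not hm π x hx, iota_not hm π⁻¹ x hx]

lemma res_trans {m : ℕ} (hm : m ≤ 6) (π : Equiv.Perm (Fin m)) (σ : Equiv.Perm (Fin 6)) :
    resPerm hm ((iotaPerm hm π).trans σ) = π.trans (resPerm hm σ) := by
  apply perm_eq_of_lt_iff
  intro a b
  rw [resPerm_lt]
  simp only [Equiv.trans_apply, iota_apply]
  rw [← resPerm_lt hm σ (π a) (π b)]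

noncomputable def permSplit {m : ℕ} (hm : m ≤ 6) :
    Equiv.Perm (Fin 6) ≃ Equiv.Perm (Fin m) ×
      {κ : Equiv.Perm (Fin 6) // resPerm hm κ = Equiv.refl (Fin m)} where
  toFun σ := (resPerm hm σ, ⟨(iotaPerm hm (resPerm hm σ)⁻¹).trans σ, by
    rw [res_trans]
    ext a
    simp⟩)
  invFun p := (iotaPerm hm p.1).trans p.2.val
  left_inv σ := by
    ext x
    simp only [Equiv.trans_apply]
    rw [iota_inv]
  right_inv p := by
    rcases p with ⟨τ, ⟨κ, hκ⟩⟩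
    have h1 : resPerm hm ((iotaPerm hm τ).trans κ) = τ := by
      rw [res_trans, hκ, Equiv.trans_refl]
    refine Prod.ext ?_ ?_
    · exact h1
    · apply Subtype.ext
      show (iotaPerm hm (resPerm hm ((iotaPerm hm τ).trans κ))⁻¹).trans
        ((iotaPerm hm τ).trans κ) = κ
      rw [h1]
      ext x
      simp only [Equiv.trans_apply]
      have := iota_inv hm τ⁻¹ x
      rw [inv_inv] at this
      rw [this]

end Marg

section Marg2

noncomputable def subProd {A B : Type*} (Q : A → Prop) : {p : A × B // Q p.1} ≃ {a : A // Q a} × B where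
  toFun p := (⟨p.1.1, p.2⟩, p.1.2)
  invFun q := ⟨(q.1.1, q.2), q.1.2⟩
  left_inv p := rfl
  right_inv q := rfl

noncomputable def profSplit (n : ℕ) {m : ℕ} (hm : m ≤ 6) :
    ProfileM n 6 ≃ ProfileM n m ×
      (Fin n → {κ : Equiv.Perm (Fin 6) // resPerm hm κ = Equiv.refl (Fin m)}) :=
  (Equiv.piCongrRight fun _ => permSplit hm).trans (Equiv.arrowProdEquivProdArrow _ _ _)

lemma profSplit_fst (n : ℕ) {m : ℕ} (hm : m ≤ 6) (x : ProfileM n 6) :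
    (profSplit n hm x).1 = fun i => resPerm hm (x i) := rfl

lemma marg (n : ℕ) {m : ℕ} (hm : m ≤ 6) (Q : ProfileM n m → Prop) [DecidablePred Q] :
    (univ.filter (fun x : ProfileM n 6 => Q (fun i => resPerm hm (x i)))).card
      * (Fintype.card (Equiv.Perm (Fin m)))^n
    = (univ.filter Q).card * (Fintype.card (Equiv.Perm (Fin 6)))^n := by
  classical
  have h1 : (univ.filter (fun x : ProfileM n 6 => Q (fun i => resPerm hm (x i)))).card
      = Fintype.card {x : ProfileM n 6 // Q (fun i => resPerm hm (x i))} :=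
    (Fintype.card_subtype _).symm
  have h2 : (univ.filter Q).card = Fintype.card {y : ProfileM n m // Q y} :=
    (Fintype.card_subtype _).symm
  have e : {x : ProfileM n 6 // Q (fun i => resPerm hm (x i))} ≃
      ({y : ProfileM n m // Q y} ×
        (Fin n → {κ : Equiv.Perm (Fin 6) // resPerm hm κ = Equiv.refl (Fin m)})) :=
    ((profSplit n hm).subtypeEquiv (fun x => by rw [profSplit_fst])).trans
      (subProd (fun y : ProfileM n m => Q y))
  have h6 : Fintype.card (Equiv.Perm (Fin 6)) = Fintype.card (Equiv.Perm (Fin m)) *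
      Fintype.card {κ : Equiv.Perm (Fin 6) // resPerm hm κ = Equiv.refl (Fin m)} := by
    rw [Fintype.card_congr (permSplit hm), Fintype.card_prod]
  rw [h1, h2, Fintype.card_congr e, Fintype.card_prod, Fintype.card_fun, h6,
    Fintype.card_fin, mul_pow]
  ring

end Marg2

section Final
variable (n : ℕ) (g : (Fin n → Bool) → Bool)

lemma event_match {m : ℕ} [NeZero m] (hm : m ≤ 6) (x : ProfileM n 6) :
    (∀ b : Fin m, b ≠ 0 → g (colM n m (fun i => resPerm hm (x i)) 0 b) = true)
    ↔ cnd (m-1) 0 (patF n g x) = true := by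
  have hm1 : 1 ≤ m := Nat.one_le_iff_ne_zero.mpr (NeZero.ne m)
  have hcol : ∀ a b : Fin m, colM n m (fun i => resPerm hm (x i)) a b
      = colM n 6 x (Fin.castLE hm a) (Fin.castLE hm b) := by
    intro a b; funext i
    simp only [colM, PrefersM]
    exact decide_eq_decide.mpr (resPerm_lt hm (x i) a b)
  have h0 : Fin.castLE hm (0 : Fin m) = (0 : Fin 6) := by
    ext; simp
  unfold cnd
  rw [decide_eq_true_eq]
  constructor
  · intro h j
    refine ⟨fun hj => ?_, fun h1 h2 => absurd h2 (by omega)⟩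
    have hblt : j.val + 1 < m := by omega
    have hb : (⟨j.val+1, hblt⟩ : Fin m) ≠ 0 := by
      intro hc
      have := congrArg Fin.val hc
      simp at this
    have hmem := h ⟨j.val+1, hblt⟩ hb
    rw [hcol, h0] at hmem
    have hsucc : Fin.castLE hm (⟨j.val+1, hblt⟩ : Fin m) = j.succ := by ext; rfl
    rw [hsucc] at hmem
    exact hmem
  · intro h b hb
    rw [hcol, h0]
    have hb1 : 1 ≤ b.val := by
      rcases Nat.eq_zero_or_pos b.val with h' | h'
      · exact absurd (Fin.ext (by simpa using h')) hb
      · exact h'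
    have hjlt : b.val - 1 < 5 := by have := b.isLt; omega
    have hj := (h ⟨b.val - 1, hjlt⟩).1 (by have := b.isLt; simp; omega)
    have hsucc : Fin.castLE hm b = (⟨b.val - 1, hjlt⟩ : Fin 5).succ := by
      ext; simp; omega
    rw [hsucc]
    exact hj

set_option maxRecDepth 100000 in
lemma GCW_eq {m : ℕ} [NeZero m] (hm : m ≤ 6)
    (hodd : ∀ z : Fin n → Bool, g (fun i => !z i) = !g z) :
    GCWprob n m g = (m * Cnt n g (cnd (m-1) 0) : ℝ)
      / ((Fintype.card (Equiv.Perm (Fin 6)))^n : ℕ) := by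
  classical
  have hL1 := L1 n g m hodd
  have hmarg := marg n hm (fun y : ProfileM n m =>
    ∀ b : Fin m, b ≠ 0 → g (colM n m y 0 b) = true)
  have hfilter : (univ.filter (fun x : ProfileM n 6 =>
      ∀ b : Fin m, b ≠ 0 → g (colM n m (fun i => resPerm hm (x i)) 0 b) = true))
      = (univ.filter (fun x : ProfileM n 6 => cnd (m-1) 0 (patF n g x) = true)) := by
    apply filter_congr
    intro x _
    exact event_match n g hm x
  rw [hfilter] at hmarg
  have hCnt : Cnt n g (cnd (m-1) 0) * (Fintype.card (Equiv.Perm (Fin m)))^n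
      = (univ.filter (fun y : ProfileM n m =>
          ∀ b : Fin m, b ≠ 0 → g (colM n m y 0 b) = true)).card
        * (Fintype.card (Equiv.Perm (Fin 6)))^n := hmarg
  have hProf : Fintype.card (ProfileM n m) = (Fintype.card (Equiv.Perm (Fin m)))^n := by
    rw [Fintype.card_fun, Fintype.card_fin]
  have hpos_m : (0:ℝ) < ((Fintype.card (Equiv.Perm (Fin m)))^n : ℕ) := by
    positivity
  have hpos_6 : (0:ℝ) < ((Fintype.card (Equiv.Perm (Fin 6)))^n : ℕ) := by
    positivity
  unfold GCWprob
  rw [hL1, hProf]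
  rw [div_eq_div_iff (by exact_mod_cast hpos_m.ne') (by exact_mod_cast hpos_6.ne')]
  push_cast
  have := congrArg (fun k : ℕ => (k : ℝ)) hCnt
  push_cast at this
  nlinarith [this]

end Final


set_option maxRecDepth 100000 in
/-- For a neutral IIA GSWF `G₆ = g^{⊗15}` on six alternatives (so `g` is odd) with
restrictions `G₅, G₃` to five and three alternatives,
`GCW(G₅) = GCW(G₆)/3 + 5·GCW(G₃)/3 − 1`. -/
theorem stmt15 (n : ℕ) (g : (Fin n → Bool) → Bool)
    (hodd : ∀ z : Fin n → Bool, g (fun i => !z i) = !g z) :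
    GCWprob n 5 g = GCWprob n 6 g / 3 + 5 * GCWprob n 3 g / 3 - 1 := by
  have h5 := GCW_eq n g (m := 5) (by norm_num) hodd
  have h6 := GCW_eq n g (m := 6) (by norm_num) hodd
  have h3 := GCW_eq n g (m := 3) (by norm_num) hodd
  norm_num at h5 h6 h3
  rw [h5, h6, h3]
  have hkey := keyNat n g hodd
  have htot : Cnt n g (cnd 0 0) = (Fintype.card (Equiv.Perm (Fin 6)))^n := by
    have h1 : Cnt n g (cnd 0 0) = Cnt n g (fun _ => true) := Cnt_congr n g (by decide)
    rw [h1, Cnt_total, Fintype.card_fun, Fintype.card_fin]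
  rw [htot] at hkey
  have hT : (0:ℝ) < ((Fintype.card (Equiv.Perm (Fin 6)) : ℝ))^n := by
    have : 0 < Fintype.card (Equiv.Perm (Fin 6)) := Fintype.card_pos
    positivity
  have hkeyR : 5 * (Cnt n g (cnd 4 0) : ℝ) + ((Fintype.card (Equiv.Perm (Fin 6)) : ℝ))^n
      = 2 * (Cnt n g (cnd 5 0) : ℝ) + 5 * (Cnt n g (cnd 2 0) : ℝ) := by
    have := congrArg (fun k : ℕ => (k : ℝ)) hkey
    push_cast at this
    linarith [this]
  field_simp
  nlinarith [hkeyR, hT]
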